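/- Let μ₀, μ₁ ∈ ℝ, σ₀, σ₁ > 0, ε > 0 and t ∈ (0,1). Starting from ν₀ ∈ ℝ, s₀ > 0, ρ₀ ∈ (-1,1), define for k ≥ 0 one discrete-time IPMF step (with N = 1 intermediate point at time t) as follows: (1) ρ̃ₖ = U(ρₖ; σ₀, sₖ), where U(ρ; σ, σ') = ((1-t)σ + tρσ')(tσ' + (1-t)ρσ)/((1-t)²σ² + 2t(1-t)ρσσ' + t²σ'² + t(1-t)ε); (2) (s'ₖ)² = σ₀²(1 - ρ̃ₖ²(1 - σ₁²/sₖ²)), ρ'ₖ = σ₀σ₁ρ̃ₖ/(sₖ s'ₖ), ν'ₖ = μ₀ - (σ₀/sₖ)ρ̃ₖ(νₖ - μ₁); (3) ρ̂ₖ = U(ρ'ₖ; s'ₖ, σ₁); (4) s²_{k+1} = σ₁²(1 - ρ̂ₖ²(1 - σ₀²/(s'ₖ)²)), ρ_{k+1} = σ₀σ₁ρ̂ₖ/(s'ₖ s_{k+1}), ν_{k+1} = μ₁ - (σ₁/s'ₖ)ρ̂ₖ(ν'ₖ - μ₀). Then the recursion is well defined (sₖ, s'ₖ > 0 and ρₖ,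 ρ̃ₖ, ρ'ₖ, ρ̂ₖ ∈ (-1,1) for all k), and there exist constants α, β ∈ (0,1), depending only on μ₀, μ₁, σ₀, σ₁, ε, t and the initial values ν₀, s₀, ρ₀, such that for all k ≥ 0: |sₖ² - σ₁²| ≤ α^{2k}|s₀² - σ₁²|, |νₖ - μ₁| ≤ α^{k}|ν₀ - μ₁|, and |χₖ - 1/ε| ≤ β^{2k}|χ₀ - 1/ε|, where χₖ = Ξ(ρₖ, σ₀, sₖ). In particular, limₖ ρₖ = ρ* = (√(σ₀²σ₁² + ε²/4) - ε/2)/(σ₀σ₁), which is the correlation of the static Schrödinger Bridge solution between N(μ₀, σ₀²) and N(μ₁, σ₁²) with volatility ε. -/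

import Mathlib

/-- The optimality coefficient `Ξ(ρ, σ, σ') = ρ / (σσ'(1 - ρ²))`. -/
noncomputable def Xi (ρ σ σ' : ℝ) : ℝ := ρ / (σ * σ' * (1 - ρ ^ 2))

/-- One-point discrete-IMF correlation update
`U(ρ; σ, σ') = ((1-t)σ + tρσ')(tσ' + (1-t)ρσ) / ((1-t)²σ² + 2t(1-t)ρσσ' + t²σ'² + t(1-t)ε)`. -/
noncomputable def imfUpdate (σ σ' ε t ρ : ℝ) : ℝ :=
  (((1 - t) * σ + t * ρ * σ') * (t * σ' + (1 - t) * ρ * σ)) /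
    ((1 - t) ^ 2 * σ ^ 2 + 2 * t * (1 - t) * ρ * σ * σ' + t ^ 2 * σ' ^ 2 + t * (1 - t) * ε)

set_option maxHeartbeats 1000000

lemma sq_le_one_of_mem (x : ℝ) (h1 : -1 < x) (h2 : x < 1) : x ^ 2 ≤ 1 := by nlinarith

lemma sq_comb_le (t x y W : ℝ) (ht0 : 0 < t) (ht1 : t < 1) (hx : 0 < x) (hy : 0 < y)
    (h : x ^ 2 + y ^ 2 ≤ W) : ((1 - t) * x + t * y) ^ 2 ≤ W := by
  have ht1' : 0 < 1 - t := by linarith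
  have c1 : (1 - t) * x ^ 2 + t * y ^ 2 - ((1 - t) * x + t * y) ^ 2
      = t * (1 - t) * (x - y) ^ 2 := by ring
  have c2 : 0 ≤ t * (1 - t) * (x - y) ^ 2 := by positivity
  have c3 : 0 ≤ t * x ^ 2 := by positivity
  have c4 : 0 ≤ (1 - t) * y ^ 2 := by positivity
  nlinarith [c1, c2, c3, c4]

lemma Xi_symm (x u v : ℝ) : Xi x u v = Xi x v u := by
  rw [Xi, Xi, mul_comm u v]

lemma convex_upper (x q P Q B : ℝ) (hq : q ^ 2 ≤ 1) (hP : P ≤ B) (hQ : Q ≤ B)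
    (hx : x = P * (1 - q ^ 2) + q ^ 2 * Q) : x ≤ B := by
  have c1 : 0 ≤ (1 - q ^ 2) * (B - P) := mul_nonneg (by linarith) (by linarith)
  have c2 : 0 ≤ q ^ 2 * (B - Q) := mul_nonneg (sq_nonneg q) (by linarith)
  nlinarith [c1, c2]

lemma convex_lower (x q P Q B : ℝ) (hq : q ^ 2 ≤ 1) (hP : B ≤ P) (hQ : B ≤ Q)
    (hx : x = P * (1 - q ^ 2) + q ^ 2 * Q) : B ≤ x := by
  have c1 : 0 ≤ (1 - q ^ 2) * (P - B) := mul_nonneg (by linarith) (by linarith)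
  have c2 : 0 ≤ q ^ 2 * (Q - B) := mul_nonneg (sq_nonneg q) (by linarith)
  nlinarith [c1, c2]

lemma ipf_main (σa σb so w ro rn : ℝ) (hσa : 0 < σa) (hσb : 0 < σb)
    (hs : 0 < so) (hw : 0 ≤ w) (hrl : -1 < ro) (hru : ro < 1)
    (hw2 : w ^ 2 = σa ^ 2 * (1 - ro ^ 2 * (1 - σb ^ 2 / so ^ 2)))
    (hrn : rn = σa * σb * ro / (so * w)) :
    0 < w ∧ (-1 < rn ∧ rn < 1) ∧ 1 - rn ^ 2 = σa ^ 2 * (1 - ro ^ 2) / w ^ 2 ∧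
    Xi rn w σb = Xi ro σa so := by
  have hso : so ≠ 0 := ne_of_gt hs
  have h1ro : (0:ℝ) < 1 - ro ^ 2 := by nlinarith
  have hpos1 : 0 < σa ^ 2 * (1 - ro ^ 2) := mul_pos (pow_pos hσa 2) h1ro
  have hw2' : w ^ 2 = σa ^ 2 * (1 - ro ^ 2) + ro ^ 2 * (σa ^ 2 * σb ^ 2 / so ^ 2) := by
    rw [hw2]; field_simp; ring
  have hwpos : 0 < w := by
    rcases hw.lt_or_eq with h | h
    · exact h
    · exfalso
      have h2 : 0 ≤ ro ^ 2 * (σa ^ 2 * σb ^ 2 / so ^ 2) := by positivity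
      nlinarith [hw2']
  have hwne : w ≠ 0 := ne_of_gt hwpos
  have hw2c : w ^ 2 * so ^ 2 = σa ^ 2 * (so ^ 2 - ro ^ 2 * (so ^ 2 - σb ^ 2)) := by
    rw [hw2]; field_simp
  have h1m : 1 - rn ^ 2 = σa ^ 2 * (1 - ro ^ 2) / w ^ 2 := by
    rw [hrn]
    field_simp
    linear_combination hw2c
  have hrn2 : rn ^ 2 < 1 := by
    have : 0 < σa ^ 2 * (1 - ro ^ 2) / w ^ 2 := by positivity
    nlinarith [h1m]
  refine ⟨hwpos, ⟨by nlinarith, by nlinarith⟩, h1m, ?_⟩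
  rw [Xi, Xi, h1m, hrn]
  field_simp

lemma imf_main (ε t σ σ' p W : ℝ) (hε : 0 < ε) (ht0 : 0 < t) (ht1 : t < 1)
    (hσ : 0 < σ) (hσ' : 0 < σ') (hpl : -1 < p) (hpu : p < 1)
    (hW : ((1 - t) * σ + t * σ') ^ 2 ≤ W) :
    (-1 < imfUpdate σ σ' ε t p ∧ imfUpdate σ σ' ε t p < 1) ∧
    (t * (1 - t)) ^ 2 * ε ^ 2 / (W + t * (1 - t) * ε) ^ 2 ≤ 1 - (imfUpdate σ σ' ε t p) ^ 2 ∧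
    ∃ r : ℝ, 0 ≤ r ∧
      r ≤ W * (W + t * (1 - t) * ε) /
          (W * (W + t * (1 - t) * ε) + (t * (1 - t)) ^ 2 * ε ^ 2) ∧
      Xi (imfUpdate σ σ' ε t p) σ σ' - 1 / ε = r * (Xi p σ σ' - 1 / ε) := by
  have ht1' : 0 < 1 - t := by linarith
  have ha : 0 < (1 - t) * σ := mul_pos ht1' hσ
  have hb : 0 < t * σ' := mul_pos ht0 hσ'
  have hab : 0 < ((1 - t) * σ) * (t * σ') := mul_pos ha hb
  have hce : 0 < t * (1 - t) * ε := by positivity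
  set D := (1 - t) ^ 2 * σ ^ 2 + 2 * t * (1 - t) * p * σ * σ' + t ^ 2 * σ' ^ 2 + t * (1 - t) * ε
    with hD
  set N := ((1 - t) * σ + t * p * σ') * (t * σ' + (1 - t) * p * σ) with hN
  have hU : imfUpdate σ σ' ε t p = N / D := rfl
  clear_value D N
  rw [hU]
  have hDN : D - N = t * (1 - t) * ε +
      (1 - p) * (((1 - t) * σ - t * σ') ^ 2 + (1 + p) * (((1 - t) * σ) * (t * σ'))) := by
    rw [hD, hN]; ring
  have hDpN : D + N = t * (1 - t) * ε +
      (1 + p) * (((1 - t) * σ - t * σ') ^ 2 + (3 + p) * (((1 - t) * σ) * (t * σ'))) := by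
    rw [hD, hN]; ring
  have hP : t * (1 - t) * ε ≤ D - N := by
    have hin : (0:ℝ) ≤ ((1 - t) * σ - t * σ') ^ 2 + (1 + p) * (((1 - t) * σ) * (t * σ')) :=
      add_nonneg (sq_nonneg _) (mul_nonneg (by linarith) hab.le)
    have := mul_nonneg (by linarith : (0:ℝ) ≤ 1 - p) hin
    linarith [hDN]
  have hQ : t * (1 - t) * ε ≤ D + N := by
    have hin : (0:ℝ) ≤ ((1 - t) * σ - t * σ') ^ 2 + (3 + p) * (((1 - t) * σ) * (t * σ')) :=
      add_nonneg (sq_nonneg _) (mul_nonneg (by linarith) hab.le)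
    have := mul_nonneg (by linarith : (0:ℝ) ≤ 1 + p) hin
    linarith [hDpN]
  have hPpos : 0 < D - N := lt_of_lt_of_le hce hP
  have hQpos : 0 < D + N := lt_of_lt_of_le hce hQ
  have hDpos : 0 < D := by linarith
  have hDne : D ≠ 0 := ne_of_gt hDpos
  have hPne : D - N ≠ 0 := ne_of_gt hPpos
  have hQne : D + N ≠ 0 := ne_of_gt hQpos
  have hεne : ε ≠ 0 := ne_of_gt hε
  have hσne : σ ≠ 0 := ne_of_gt hσ
  have hσ'ne : σ' ≠ 0 := ne_of_gt hσ'
  have hUbound : -1 < N / D ∧ N / D < 1 := by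
    constructor
    · rw [lt_div_iff₀ hDpos]; linarith
    · rw [div_lt_one hDpos]; linarith
  have hDle : D ≤ W + t * (1 - t) * ε := by
    rw [hD]
    have := mul_nonneg (by linarith : (0:ℝ) ≤ 1 - p) hab.le
    linarith [hW]
  have hWpos : 0 < W := lt_of_lt_of_le (by positivity) hW
  have h1mU : 1 - (N / D) ^ 2 = (D - N) * (D + N) / D ^ 2 := by
    field_simp; ring
  have hlow : (t * (1 - t)) ^ 2 * ε ^ 2 / (W + t * (1 - t) * ε) ^ 2 ≤ 1 - (N / D) ^ 2 := by
    rw [h1mU]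
    apply div_le_div₀ (mul_pos hPpos hQpos).le
    · linarith [mul_le_mul hP hQ hce.le hPpos.le]
    · exact pow_pos hDpos 2
    · have h0 : 0 < W + t * (1 - t) * ε := by linarith [hWpos, hce]
      have := mul_self_le_mul_self hDpos.le hDle
      calc D ^ 2 = D * D := sq D
        _ ≤ (W + t * (1 - t) * ε) * (W + t * (1 - t) * ε) := this
        _ = (W + t * (1 - t) * ε) ^ 2 := (sq _).symm
  set E := ((1 - t) * σ) ^ 2 + (t * σ') ^ 2 + p * (((1 - t) * σ) * (t * σ')) with hE
  set M := E * (E + t * (1 - t) * ε) - (((1 - t) * σ) * (t * σ')) ^ 2 with hM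
  clear_value E M
  have hEmab : 0 < E - ((1 - t) * σ) * (t * σ') := by
    have h1 : E - ((1 - t) * σ) * (t * σ')
        = ((1 - t) * σ - t * σ') ^ 2 + (1 + p) * (((1 - t) * σ) * (t * σ')) := by
      rw [hE]; ring
    have h2 := mul_pos (show (0:ℝ) < 1 + p by linarith) hab
    linarith [sq_nonneg ((1 - t) * σ - t * σ')]
  have hEpab : 0 < E + ((1 - t) * σ) * (t * σ') := by
    have h1 : E + ((1 - t) * σ) * (t * σ')
        = ((1 - t) * σ - t * σ') ^ 2 + (3 + p) * (((1 - t) * σ) * (t * σ')) := by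
      rw [hE]; ring
    have h2 := mul_pos (show (0:ℝ) < 3 + p by linarith) hab
    linarith [sq_nonneg ((1 - t) * σ - t * σ')]
  have hEpos : 0 < E := by linarith
  have hMalt : M = (E - ((1 - t) * σ) * (t * σ')) * (E + ((1 - t) * σ) * (t * σ'))
      + t * (1 - t) * ε * E := by rw [hM]; ring
  have hMpos : 0 < M := by
    rw [hMalt]
    linarith [mul_pos hEmab hEpab, mul_pos hce hEpos]
  have h1p2 : (0:ℝ) < 1 - p ^ 2 := by
    have := mul_pos (show (0:ℝ) < 1 - p by linarith) (show (0:ℝ) < 1 + p by linarith)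
    linarith
  have h1p2ne : (1:ℝ) - p ^ 2 ≠ 0 := ne_of_gt h1p2
  refine ⟨hUbound, hlow, ((1 - p ^ 2) * M) / ((D - N) * (D + N)),
    le_of_lt (div_pos (mul_pos h1p2 hMpos) (mul_pos hPpos hQpos)), ?_, ?_⟩
  · set K := W * (W + t * (1 - t) * ε) with hK
    set d := (t * (1 - t)) ^ 2 * ε ^ 2 with hd
    clear_value K d
    have hdpos : 0 < d := by rw [hd]; positivity
    have hKpos : 0 < K := by rw [hK]; positivity
    have hG : (D - N) * (D + N) = (1 - p ^ 2) * M +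
        t * (1 - t) * ε * ((1 + p ^ 2) * E + 2 * p * (((1 - t) * σ) * (t * σ'))
          + t * (1 - t) * ε) := by
      rw [hM, hE, hD, hN]; ring
    have hGge : t * (1 - t) * ε ≤ (1 + p ^ 2) * E + 2 * p * (((1 - t) * σ) * (t * σ'))
        + t * (1 - t) * ε := by
      rw [hE]
      have hq1 : (0:ℝ) ≤ p ^ 2 + p + 2 := by linarith [sq_nonneg (p + 1)]
      have hq2 : (0:ℝ) ≤ 1 + p ^ 2 := by positivity
      have c1 := mul_nonneg (mul_nonneg (by linarith : (0:ℝ) ≤ 1 + p) hq1) hab.le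
      have c2 := mul_nonneg hq2 (sq_nonneg ((1 - t) * σ - t * σ'))
      linarith
    have hEle : E ≤ ((1 - t) * σ + t * σ') ^ 2 := by
      rw [hE]
      have := mul_nonneg (by linarith : (0:ℝ) ≤ 2 - p) hab.le
      linarith
    have hMle : M ≤ K := by
      rw [hM, hK]
      have h1 : E * (E + t * (1 - t) * ε) ≤ W * (W + t * (1 - t) * ε) :=
        mul_le_mul (le_trans hEle hW) (by linarith [le_trans hEle hW])
          (by linarith [hEpos, hce]) hWpos.le
      linarith [sq_nonneg (((1 - t) * σ) * (t * σ'))]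
    have hNumK : (1 - p ^ 2) * M ≤ K := by
      linarith [mul_nonneg (sq_nonneg p) hMpos.le, hMle]
    rw [div_le_div_iff₀ (mul_pos hPpos hQpos) (by positivity)]
    calc (1 - p ^ 2) * M * (K + d)
        = (1 - p ^ 2) * M * K + (1 - p ^ 2) * M * d := by ring
      _ ≤ (1 - p ^ 2) * M * K + K * (t * (1 - t) * ε * ((1 + p ^ 2) * E
            + 2 * p * (((1 - t) * σ) * (t * σ')) + t * (1 - t) * ε)) := by
          have h2 : (1 - p ^ 2) * M * d ≤ K * d :=
            mul_le_mul_of_nonneg_right hNumK hdpos.le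
          have h3 : K * d ≤ K * (t * (1 - t) * ε * ((1 + p ^ 2) * E
              + 2 * p * (((1 - t) * σ) * (t * σ')) + t * (1 - t) * ε)) := by
            apply mul_le_mul_of_nonneg_left _ hKpos.le
            calc d = (t * (1 - t) * ε) * (t * (1 - t) * ε) := by rw [hd]; ring
              _ ≤ _ := mul_le_mul_of_nonneg_left hGge hce.le
          linarith
      _ = K * ((D - N) * (D + N)) := by rw [hG]; ring
  · have key : ε * N * D - σ * σ' * ((D - N) * (D + N))
        = M * (ε * p - σ * σ' * (1 - p ^ 2)) := by
      rw [hM, hE, hD, hN]; ring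
    simp only [Xi]
    rw [h1mU]
    field_simp
    linear_combination key

/-- Quantitative convergence of the discrete-time IPMF procedure (with one
intermediate time point `t`) between 1D Gaussians `N(μ₀, σ₀²)` and `N(μ₁, σ₁²)` with
volatility `ε`. Each IPMF step consists of an IMF correlation update, an IPF projection
onto the final marginal, a second IMF update, and an IPF projection onto the starting
marginal, with the stated explicit formulas. Then the recursion is well defined
(`sₖ, s'ₖ > 0` and all correlations lie in `(-1,1)`), and there exist `α, β ∈ (0,1)` such
that `|sₖ² - σ₁²| ≤ α^(2k)|s₀² - σ₁²|`, `|νₖ - μ₁| ≤ α^k|ν₀ - μ₁|` and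
`|χₖ - 1/ε| ≤ β^(2k)|χ₀ - 1/ε|` where `χₖ = Ξ(ρₖ, σ₀, sₖ)`; in particular
`ρₖ → ρ* = (√(σ₀²σ₁² + ε²/4) - ε/2)/(σ₀σ₁)`, the correlation of the static Schrödinger
Bridge solution. -/
theorem IPMF_convergence_1D_gaussians (μ₀ μ₁ σ₀ σ₁ ε t : ℝ)
    (hσ₀ : 0 < σ₀) (hσ₁ : 0 < σ₁) (hε : 0 < ε) (ht : t ∈ Set.Ioo (0 : ℝ) 1)
    (ρ ρt ρ' ρh s s' ν ν' : ℕ → ℝ)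
    (hs0 : 0 < s 0) (hρ0 : ρ 0 ∈ Set.Ioo (-1 : ℝ) 1)
    (hsnn : ∀ k, 0 ≤ s k) (hs'nn : ∀ k, 0 ≤ s' k)
    -- (1) first IMF step
    (hρt : ∀ k, ρt k = imfUpdate σ₀ (s k) ε t (ρ k))
    -- (2) IPF projection of the final marginal onto N(μ₁, σ₁²)
    (hs' : ∀ k, (s' k) ^ 2 = σ₀ ^ 2 * (1 - (ρt k) ^ 2 * (1 - σ₁ ^ 2 / (s k) ^ 2)))
    (hρ' : ∀ k, ρ' k = σ₀ * σ₁ * ρt k / (s k * s' k))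
    (hν' : ∀ k, ν' k = μ₀ - (σ₀ / s k) * ρt k * (ν k - μ₁))
    -- (3) second IMF step
    (hρh : ∀ k, ρh k = imfUpdate (s' k) σ₁ ε t (ρ' k))
    -- (4) IPF projection of the starting marginal onto N(μ₀, σ₀²)
    (hs1 : ∀ k, (s (k + 1)) ^ 2 = σ₁ ^ 2 * (1 - (ρh k) ^ 2 * (1 - σ₀ ^ 2 / (s' k) ^ 2)))
    (hρ1 : ∀ k, ρ (k + 1) = σ₀ * σ₁ * ρh k / (s' k * s (k + 1)))
    (hν1 : ∀ k, ν (k + 1) = μ₁ - (σ₁ / s' k) * ρh k * (ν' k - μ₀)) :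
    (∀ k, 0 < s k ∧ 0 < s' k ∧ ρ k ∈ Set.Ioo (-1 : ℝ) 1 ∧ ρt k ∈ Set.Ioo (-1 : ℝ) 1 ∧
      ρ' k ∈ Set.Ioo (-1 : ℝ) 1 ∧ ρh k ∈ Set.Ioo (-1 : ℝ) 1) ∧
    ∃ α β : ℝ, α ∈ Set.Ioo (0 : ℝ) 1 ∧ β ∈ Set.Ioo (0 : ℝ) 1 ∧
      (∀ k, |(s k) ^ 2 - σ₁ ^ 2| ≤ α ^ (2 * k) * |(s 0) ^ 2 - σ₁ ^ 2| ∧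
        |ν k - μ₁| ≤ α ^ k * |ν 0 - μ₁| ∧
        |Xi (ρ k) σ₀ (s k) - 1 / ε| ≤ β ^ (2 * k) * |Xi (ρ 0) σ₀ (s 0) - 1 / ε|) ∧
      Filter.Tendsto ρ Filter.atTop
        (nhds ((Real.sqrt (σ₀ ^ 2 * σ₁ ^ 2 + ε ^ 2 / 4) - ε / 2) / (σ₀ * σ₁))) := by
  obtain ⟨ht0, ht1⟩ := ht
  obtain ⟨hρ0l, hρ0u⟩ := hρ0
  have hεne : ε ≠ 0 := ne_of_gt hε
  -- constants
  set L := min ((s 0) ^ 2) (σ₁ ^ 2) with hLdef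
  set A := max ((s 0) ^ 2) (σ₁ ^ 2) with hAdef
  have hL0 : 0 < L := lt_min (pow_pos hs0 2) (pow_pos hσ₁ 2)
  have hA0 : 0 < A := lt_of_lt_of_le (pow_pos hσ₁ 2) (le_max_right _ _)
  have hLσ₁ : L ≤ σ₁ ^ 2 := min_le_right _ _
  have hσ₁A : σ₁ ^ 2 ≤ A := le_max_right _ _
  set A' := σ₀ ^ 2 * σ₁ ^ 2 / L with hA'def
  set L' := σ₀ ^ 2 * σ₁ ^ 2 / A with hL'def
  have hA'0 : 0 < A' := by rw [hA'def]; exact div_pos (by positivity) hL0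
  have hL'0 : 0 < L' := by rw [hL'def]; exact div_pos (by positivity) hA0
  have hσ₀A' : σ₀ ^ 2 ≤ A' := by
    rw [hA'def, le_div_iff₀ hL0]
    calc σ₀ ^ 2 * L ≤ σ₀ ^ 2 * σ₁ ^ 2 := mul_le_mul_of_nonneg_left hLσ₁ (sq_nonneg σ₀)
      _ = σ₀ ^ 2 * σ₁ ^ 2 := rfl
  have hL'σ₀ : L' ≤ σ₀ ^ 2 := by
    rw [hL'def, div_le_iff₀ hA0]
    exact mul_le_mul_of_nonneg_left hσ₁A (sq_nonneg σ₀)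
  set W := 2 * σ₀ ^ 2 + 2 * A + 2 * A' + 2 * σ₁ ^ 2 with hWdef
  have hW0 : 0 < W := by
    rw [hWdef]; linarith [hA0, hA'0, pow_pos hσ₀ 2, pow_pos hσ₁ 2]
  have hce : 0 < t * (1 - t) * ε := by
    have : 0 < 1 - t := by linarith
    positivity
  set K := W * (W + t * (1 - t) * ε) with hKdef
  set d := (t * (1 - t)) ^ 2 * ε ^ 2 with hddef
  have hK0 : 0 < K := by rw [hKdef]; exact mul_pos hW0 (by linarith)
  have hd0 : 0 < d := by
    rw [hddef]
    have : 0 < 1 - t := by linarith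
    positivity
  set β₀ := K / (K + d) with hβ₀def
  have hβ₀0 : 0 < β₀ := by rw [hβ₀def]; exact div_pos hK0 (by linarith)
  have hβ₀1 : β₀ < 1 := by
    rw [hβ₀def, div_lt_one (by linarith)]; linarith
  set δ := d / (W + t * (1 - t) * ε) ^ 2 with hδdef
  have hδ0 : 0 < δ := by
    rw [hδdef]; exact div_pos hd0 (pow_pos (by linarith) 2)
  set η := min (min (σ₀ ^ 2 * δ / A') δ) (1 / 2) with hηdef
  have hη0 : 0 < η := by
    rw [hηdef]
    exact lt_min (lt_min (div_pos (mul_pos (pow_pos hσ₀ 2) hδ0) hA'0) hδ0) (by norm_num)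
  have hη2 : η ≤ 1 / 2 := min_le_right _ _
  have hη3 : η ≤ σ₀ ^ 2 * δ / A' := le_trans (min_le_left _ _) (min_le_left _ _)
  have hη4 : η ≤ δ := le_trans (min_le_left _ _) (min_le_right _ _)
  set α := 1 - η with hαdef
  have hα0 : 0 < α := by rw [hαdef]; linarith
  have hα1 : α < 1 := by rw [hαdef]; linarith
  -- the master step
  have step : ∀ k, (0 < s k ∧ (-1 < ρ k ∧ ρ k < 1) ∧ L ≤ (s k) ^ 2 ∧ (s k) ^ 2 ≤ A) →
      (0 < s' k ∧ (-1 < ρt k ∧ ρt k < 1) ∧ (-1 < ρ' k ∧ ρ' k < 1) ∧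
        (-1 < ρh k ∧ ρh k < 1)) ∧
      (0 < s (k + 1) ∧ (-1 < ρ (k + 1) ∧ ρ (k + 1) < 1) ∧ L ≤ (s (k + 1)) ^ 2 ∧
        (s (k + 1)) ^ 2 ≤ A) ∧
      |ρ' k * ρh k| ≤ α ∧
      (s (k + 1)) ^ 2 - σ₁ ^ 2 = (ρ' k * ρh k) ^ 2 * ((s k) ^ 2 - σ₁ ^ 2) ∧
      ν (k + 1) - μ₁ = (ρ' k * ρh k) * (ν k - μ₁) ∧
      |Xi (ρ (k + 1)) σ₀ (s (k + 1)) - 1 / ε| ≤ β₀ * |Xi (ρ k) σ₀ (s k) - 1 / ε| := by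
    intro k ⟨hsk, ⟨hρkl, hρku⟩, hLk, hAk⟩
    have hskne : s k ≠ 0 := ne_of_gt hsk
    -- first IMF step
    have hW1 : ((1 - t) * σ₀ + t * (s k)) ^ 2 ≤ W := by
      apply sq_comb_le t σ₀ (s k) W ht0 ht1 hσ₀ hsk
      rw [hWdef]
      linarith [hAk, hA'0, pow_pos hσ₁ 2, pow_pos hσ₀ 2, hA0]
    have I1 := imf_main ε t σ₀ (s k) (ρ k) W hε ht0 ht1 hσ₀ hsk hρkl hρku hW1
    rw [← hρt k] at I1
    obtain ⟨⟨hρtl, hρtu⟩, hδ1, r₁, hr₁0, hr₁b, hXi1⟩ := I1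
    -- first IPF step
    obtain ⟨hs'pos, ⟨hρ'l, hρ'u⟩, h1mρ', hXieq1⟩ :=
      ipf_main σ₀ σ₁ (s k) (s' k) (ρt k) (ρ' k) hσ₀ hσ₁ hsk (hs'nn k) hρtl hρtu
        (hs' k) (hρ' k)
    have hs'ne : s' k ≠ 0 := ne_of_gt hs'pos
    -- bounds on s'
    have hρt2 : (ρt k) ^ 2 ≤ 1 := sq_le_one_of_mem _ hρtl hρtu
    have hconv1 : (s' k) ^ 2 = σ₀ ^ 2 * (1 - (ρt k) ^ 2)
        + (ρt k) ^ 2 * (σ₀ ^ 2 * σ₁ ^ 2 / (s k) ^ 2) := by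
      rw [hs' k]; field_simp; ring
    have hq1 : σ₀ ^ 2 * σ₁ ^ 2 / (s k) ^ 2 ≤ A' := by
      rw [hA'def]
      exact div_le_div_of_nonneg_left (by positivity) hL0 hLk
    have hq2 : L' ≤ σ₀ ^ 2 * σ₁ ^ 2 / (s k) ^ 2 := by
      rw [hL'def]
      exact div_le_div_of_nonneg_left (by positivity) (pow_pos hsk 2) hAk
    have hs'A' : (s' k) ^ 2 ≤ A' := convex_upper _ _ _ _ _ hρt2 hσ₀A' hq1 hconv1
    have hs'L' : L' ≤ (s' k) ^ 2 := convex_lower _ _ _ _ _ hρt2 hL'σ₀ hq2 hconv1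
    -- second IMF step
    have hW2 : ((1 - t) * (s' k) + t * σ₁) ^ 2 ≤ W := by
      apply sq_comb_le t (s' k) σ₁ W ht0 ht1 hs'pos hσ₁
      rw [hWdef]
      linarith [hs'A', hA0, pow_pos hσ₀ 2, pow_pos hσ₁ 2]
    have I3 := imf_main ε t (s' k) σ₁ (ρ' k) W hε ht0 ht1 hs'pos hσ₁ hρ'l hρ'u hW2
    rw [← hρh k] at I3
    obtain ⟨⟨hρhl, hρhu⟩, hδ2, r₂, hr₂0, hr₂b, hXi2⟩ := I3
    -- second IPF step
    obtain ⟨hs1pos, ⟨hρ1l, hρ1u⟩, h1mρ1, hXieq2⟩ :=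
      ipf_main σ₁ σ₀ (s' k) (s (k + 1)) (ρh k) (ρ (k + 1)) hσ₁ hσ₀ hs'pos (hsnn (k + 1))
        hρhl hρhu (hs1 k) (by rw [hρ1 k]; ring)
    have hs1ne : s (k + 1) ≠ 0 := ne_of_gt hs1pos
    -- bounds on s (k+1)
    have hρh2 : (ρh k) ^ 2 ≤ 1 := sq_le_one_of_mem _ hρhl hρhu
    have hconv2 : (s (k + 1)) ^ 2 = σ₁ ^ 2 * (1 - (ρh k) ^ 2)
        + (ρh k) ^ 2 * (σ₁ ^ 2 * σ₀ ^ 2 / (s' k) ^ 2) := by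
      rw [hs1 k]; field_simp; ring
    have he1 : σ₁ ^ 2 * σ₀ ^ 2 / (s' k) ^ 2 ≤ A := by
      have h1 : σ₁ ^ 2 * σ₀ ^ 2 / (s' k) ^ 2 ≤ σ₁ ^ 2 * σ₀ ^ 2 / L' :=
        div_le_div_of_nonneg_left (by positivity) hL'0 hs'L'
      have h2 : σ₁ ^ 2 * σ₀ ^ 2 / L' = A := by
        rw [hL'def]; field_simp
      linarith
    have he2 : L ≤ σ₁ ^ 2 * σ₀ ^ 2 / (s' k) ^ 2 := by
      have h1 : σ₁ ^ 2 * σ₀ ^ 2 / A' ≤ σ₁ ^ 2 * σ₀ ^ 2 / (s' k) ^ 2 :=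
        div_le_div_of_nonneg_left (by positivity) (pow_pos hs'pos 2) hs'A'
      have h2 : σ₁ ^ 2 * σ₀ ^ 2 / A' = L := by
        rw [hA'def]; field_simp
      linarith
    have hs1A : (s (k + 1)) ^ 2 ≤ A := convex_upper _ _ _ _ _ hρh2 hσ₁A he1 hconv2
    have hs1L : L ≤ (s (k + 1)) ^ 2 := convex_lower _ _ _ _ _ hρh2 hLσ₁ he2 hconv2
    -- uniform correlation bound
    have hρ'b : (ρ' k) ^ 2 ≤ 1 - η := by
      have h1 : σ₀ ^ 2 * δ / A' ≤ σ₀ ^ 2 * (1 - (ρt k) ^ 2) / (s' k) ^ 2 := by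
        apply div_le_div₀ (mul_nonneg (sq_nonneg σ₀) (by linarith [hρt2]))
          (mul_le_mul_of_nonneg_left (by rw [hδdef]; exact hδ1) (sq_nonneg σ₀))
          (pow_pos hs'pos 2) hs'A'
      rw [← h1mρ'] at h1
      linarith [hη3]
    have hρhb : (ρh k) ^ 2 ≤ 1 - η := by
      have h1 : δ ≤ 1 - (ρh k) ^ 2 := by rw [hδdef]; exact hδ2
      linarith [hη4]
    have hprod : |ρ' k * ρh k| ≤ α := by
      have h2 : (ρ' k * ρh k) ^ 2 ≤ α ^ 2 := by
        have := mul_le_mul hρ'b hρhb (sq_nonneg _) (by linarith : (0:ℝ) ≤ 1 - η)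
        calc (ρ' k * ρh k) ^ 2 = (ρ' k) ^ 2 * (ρh k) ^ 2 := by ring
          _ ≤ (1 - η) * (1 - η) := this
          _ = α ^ 2 := by rw [hαdef]; ring
      have h3 := Real.sqrt_le_sqrt h2
      rwa [Real.sqrt_sq_eq_abs, Real.sqrt_sq hα0.le] at h3
    -- recursion identities
    have e1 : (s' k) ^ 2 * (s k) ^ 2
        = σ₀ ^ 2 * ((s k) ^ 2 - (ρt k) ^ 2 * ((s k) ^ 2 - σ₁ ^ 2)) := by
      rw [hs' k]; field_simp
    have e2 : (s (k + 1)) ^ 2 * (s' k) ^ 2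
        = σ₁ ^ 2 * ((s' k) ^ 2 - (ρh k) ^ 2 * ((s' k) ^ 2 - σ₀ ^ 2)) := by
      rw [hs1 k]; field_simp
    have hsrec : (s (k + 1)) ^ 2 - σ₁ ^ 2 = (ρ' k * ρh k) ^ 2 * ((s k) ^ 2 - σ₁ ^ 2) := by
      rw [hρ' k]
      field_simp
      linear_combination (s k) ^ 2 * e2 - σ₁ ^ 2 * (ρh k) ^ 2 * e1
    have hνrec : ν (k + 1) - μ₁ = (ρ' k * ρh k) * (ν k - μ₁) := by
      rw [hν1 k, hν' k, hρ' k]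
      field_simp
      ring
    -- Xi chain
    have hchain : Xi (ρ (k + 1)) σ₀ (s (k + 1)) - 1 / ε
        = r₂ * r₁ * (Xi (ρ k) σ₀ (s k) - 1 / ε) := by
      calc Xi (ρ (k + 1)) σ₀ (s (k + 1)) - 1 / ε
          = Xi (ρ (k + 1)) (s (k + 1)) σ₀ - 1 / ε := by rw [Xi_symm]
        _ = Xi (ρh k) σ₁ (s' k) - 1 / ε := by rw [hXieq2]
        _ = Xi (ρh k) (s' k) σ₁ - 1 / ε := by rw [Xi_symm]
        _ = r₂ * (Xi (ρ' k) (s' k) σ₁ - 1 / ε) := hXi2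
        _ = r₂ * (Xi (ρt k) σ₀ (s k) - 1 / ε) := by rw [hXieq1]
        _ = r₂ * (r₁ * (Xi (ρ k) σ₀ (s k) - 1 / ε)) := by rw [hXi1]
        _ = r₂ * r₁ * (Xi (ρ k) σ₀ (s k) - 1 / ε) := by ring
    have hβchain : |Xi (ρ (k + 1)) σ₀ (s (k + 1)) - 1 / ε|
        ≤ β₀ * |Xi (ρ k) σ₀ (s k) - 1 / ε| := by
      rw [hchain, abs_mul, abs_of_nonneg (mul_nonneg hr₂0 hr₁0)]
      have hr : r₂ * r₁ ≤ β₀ := by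
        have h1 : r₂ * r₁ ≤ β₀ * β₀ := mul_le_mul hr₂b hr₁b hr₁0 hβ₀0.le
        have h2 : β₀ * β₀ ≤ 1 * β₀ := mul_le_mul_of_nonneg_right hβ₀1.le hβ₀0.le
        calc r₂ * r₁ ≤ β₀ * β₀ := h1
          _ ≤ 1 * β₀ := h2
          _ = β₀ := one_mul β₀
      exact mul_le_mul_of_nonneg_right hr (abs_nonneg _)
    exact ⟨⟨hs'pos, ⟨hρtl, hρtu⟩, ⟨hρ'l, hρ'u⟩, ⟨hρhl, hρhu⟩⟩,
      ⟨hs1pos, ⟨hρ1l, hρ1u⟩, hs1L, hs1A⟩, hprod, hsrec, hνrec, hβchain⟩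
  -- the invariant
  have inv : ∀ k, 0 < s k ∧ (-1 < ρ k ∧ ρ k < 1) ∧ L ≤ (s k) ^ 2 ∧ (s k) ^ 2 ≤ A := by
    intro k
    induction k with
    | zero => exact ⟨hs0, ⟨hρ0l, hρ0u⟩, min_le_left _ _, le_max_left _ _⟩
    | succ n ih => exact (step n ih).2.1
  -- the three quantitative bounds
  have hsb : ∀ k, |(s k) ^ 2 - σ₁ ^ 2| ≤ (α ^ 2) ^ k * |(s 0) ^ 2 - σ₁ ^ 2| := by
    intro k
    induction k with
    | zero => simp
    | succ n ih =>
      obtain ⟨_, _, hαk, hs2, _, _⟩ := step n (inv n)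
      calc |(s (n + 1)) ^ 2 - σ₁ ^ 2| = (ρ' n * ρh n) ^ 2 * |(s n) ^ 2 - σ₁ ^ 2| := by
            rw [hs2, abs_mul, abs_of_nonneg (sq_nonneg _)]
        _ ≤ α ^ 2 * ((α ^ 2) ^ n * |(s 0) ^ 2 - σ₁ ^ 2|) := by
            apply mul_le_mul _ ih (abs_nonneg _) (sq_nonneg α)
            calc (ρ' n * ρh n) ^ 2 = |ρ' n * ρh n| ^ 2 := (sq_abs _).symm
              _ ≤ α ^ 2 := by
                  apply pow_le_pow_left₀ (abs_nonneg _) hαk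
        _ = (α ^ 2) ^ (n + 1) * |(s 0) ^ 2 - σ₁ ^ 2| := by ring
  have hνb : ∀ k, |ν k - μ₁| ≤ α ^ k * |ν 0 - μ₁| := by
    intro k
    induction k with
    | zero => simp
    | succ n ih =>
      obtain ⟨_, _, hαk, _, hν2, _⟩ := step n (inv n)
      calc |ν (n + 1) - μ₁| = |ρ' n * ρh n| * |ν n - μ₁| := by rw [hν2, abs_mul]
        _ ≤ α * (α ^ n * |ν 0 - μ₁|) := mul_le_mul hαk ih (abs_nonneg _) hα0.le
        _ = α ^ (n + 1) * |ν 0 - μ₁| := by ring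
  have hχb : ∀ k, |Xi (ρ k) σ₀ (s k) - 1 / ε| ≤ β₀ ^ k * |Xi (ρ 0) σ₀ (s 0) - 1 / ε| := by
    intro k
    induction k with
    | zero => simp
    | succ n ih =>
      obtain ⟨_, _, _, _, _, hβ2⟩ := step n (inv n)
      calc |Xi (ρ (n + 1)) σ₀ (s (n + 1)) - 1 / ε| ≤ β₀ * |Xi (ρ n) σ₀ (s n) - 1 / ε| := hβ2
        _ ≤ β₀ * (β₀ ^ n * |Xi (ρ 0) σ₀ (s 0) - 1 / ε|) :=
            mul_le_mul_of_nonneg_left ih hβ₀0.le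
        _ = β₀ ^ (n + 1) * |Xi (ρ 0) σ₀ (s 0) - 1 / ε| := by ring
  -- limits
  have hαsq0 : Filter.Tendsto (fun n : ℕ => (α ^ 2) ^ n) Filter.atTop (nhds 0) :=
    tendsto_pow_atTop_nhds_zero_of_lt_one (sq_nonneg α)
      (by
        calc α ^ 2 = α * α := sq α
          _ < 1 * 1 := by
            apply mul_lt_mul' hα1.le hα1 hα0.le one_pos
          _ = 1 := one_mul 1)
  have hβ₀pow : Filter.Tendsto (fun n : ℕ => β₀ ^ n) Filter.atTop (nhds 0) :=
    tendsto_pow_atTop_nhds_zero_of_lt_one hβ₀0.le hβ₀1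
  have hs2tend : Filter.Tendsto (fun k => (s k) ^ 2) Filter.atTop (nhds (σ₁ ^ 2)) := by
    have hg : Filter.Tendsto (fun k : ℕ => (α ^ 2) ^ k * |(s 0) ^ 2 - σ₁ ^ 2|)
        Filter.atTop (nhds 0) := by simpa using hαsq0.mul_const _
    have h0 : Filter.Tendsto (fun k => (s k) ^ 2 - σ₁ ^ 2) Filter.atTop (nhds 0) :=
      squeeze_zero_norm (fun k => by simpa [Real.norm_eq_abs] using hsb k) hg
    have := h0.add_const (σ₁ ^ 2)
    simpa using this
  have hstend : Filter.Tendsto s Filter.atTop (nhds σ₁) := by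
    have h1 : Filter.Tendsto (fun k => Real.sqrt ((s k) ^ 2)) Filter.atTop
        (nhds (Real.sqrt (σ₁ ^ 2))) := (Real.continuous_sqrt.continuousAt).tendsto.comp hs2tend
    have h2 : (fun k => Real.sqrt ((s k) ^ 2)) = s := funext fun k => Real.sqrt_sq (hsnn k)
    rw [h2, Real.sqrt_sq hσ₁.le] at h1
    exact h1
  have hχtend : Filter.Tendsto (fun k => Xi (ρ k) σ₀ (s k)) Filter.atTop (nhds (1 / ε)) := by
    have hg : Filter.Tendsto (fun k : ℕ => β₀ ^ k * |Xi (ρ 0) σ₀ (s 0) - 1 / ε|)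
        Filter.atTop (nhds 0) := by simpa using hβ₀pow.mul_const _
    have h0 : Filter.Tendsto (fun k => Xi (ρ k) σ₀ (s k) - 1 / ε) Filter.atTop (nhds 0) :=
      squeeze_zero_norm (fun k => by simpa [Real.norm_eq_abs] using hχb k) hg
    have := h0.add_const (1 / ε)
    simpa using this
  have hytend : Filter.Tendsto (fun k => σ₀ * s k * Xi (ρ k) σ₀ (s k)) Filter.atTop
      (nhds (σ₀ * σ₁ * (1 / ε))) :=
    ((tendsto_const_nhds.mul hstend).mul hχtend)
  have hρeq : ∀ k, ρ k =
      (Real.sqrt (1 + 4 * (σ₀ * s k * Xi (ρ k) σ₀ (s k)) ^ 2) - 1)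
        / (2 * (σ₀ * s k * Xi (ρ k) σ₀ (s k))) := by
    intro k
    obtain ⟨hsk, ⟨hρkl, hρku⟩, _, _⟩ := inv k
    have hskne : s k ≠ 0 := ne_of_gt hsk
    have h1ρ : (0:ℝ) < 1 - (ρ k) ^ 2 := by
      have := mul_pos (show (0:ℝ) < 1 - ρ k by linarith) (show (0:ℝ) < 1 + ρ k by linarith)
      linarith
    have hy : σ₀ * s k * Xi (ρ k) σ₀ (s k) = ρ k / (1 - (ρ k) ^ 2) := by
      rw [Xi]
      field_simp
    rw [hy]
    rcases eq_or_ne (ρ k) 0 with h0 | h0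
    · simp [h0]
    · have hsq : 1 + 4 * (ρ k / (1 - (ρ k) ^ 2)) ^ 2
          = ((1 + (ρ k) ^ 2) / (1 - (ρ k) ^ 2)) ^ 2 := by
        field_simp
        ring
      rw [hsq, Real.sqrt_sq (le_of_lt (div_pos (by positivity) h1ρ))]
      field_simp
      ring
  have hy0 : σ₀ * σ₁ * (1 / ε) ≠ 0 := by positivity
  have hcont : ContinuousAt (fun y : ℝ => (Real.sqrt (1 + 4 * y ^ 2) - 1) / (2 * y))
      (σ₀ * σ₁ * (1 / ε)) := by
    apply ContinuousAt.div
    · apply ContinuousAt.sub _ continuousAt_const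
      exact (Real.continuous_sqrt.continuousAt).comp (by fun_prop)
    · fun_prop
    · show 2 * (σ₀ * σ₁ * (1 / ε)) ≠ 0
      positivity
  have hlim : Filter.Tendsto ρ Filter.atTop
      (nhds ((Real.sqrt (1 + 4 * (σ₀ * σ₁ * (1 / ε)) ^ 2) - 1)
        / (2 * (σ₀ * σ₁ * (1 / ε))))) := by
    have h1 := (hcont.tendsto).comp hytend
    apply h1.congr
    intro k
    exact (hρeq k).symm
  have hlimval : (Real.sqrt (1 + 4 * (σ₀ * σ₁ * (1 / ε)) ^ 2) - 1)
      / (2 * (σ₀ * σ₁ * (1 / ε)))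
      = (Real.sqrt (σ₀ ^ 2 * σ₁ ^ 2 + ε ^ 2 / 4) - ε / 2) / (σ₀ * σ₁) := by
    have hS0 : (0:ℝ) ≤ σ₀ ^ 2 * σ₁ ^ 2 + ε ^ 2 / 4 := by positivity
    have hS := Real.sq_sqrt hS0
    have hSnn := Real.sqrt_nonneg (σ₀ ^ 2 * σ₁ ^ 2 + ε ^ 2 / 4)
    set S := Real.sqrt (σ₀ ^ 2 * σ₁ ^ 2 + ε ^ 2 / 4) with hSdef
    clear_value S
    have h1 : 1 + 4 * (σ₀ * σ₁ * (1 / ε)) ^ 2 = (2 * S / ε) ^ 2 := by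
      field_simp
      linear_combination (-4:ℝ) * hS
    rw [h1, Real.sqrt_sq (div_nonneg (by linarith) hε.le)]
    field_simp
  -- assemble
  refine ⟨fun k => ?_, α, Real.sqrt β₀, ⟨hα0, hα1⟩,
    ⟨Real.sqrt_pos.mpr hβ₀0, ?_⟩, fun k => ⟨?_, hνb k, ?_⟩, ?_⟩
  · obtain ⟨hsk, hρk, _, _⟩ := inv k
    obtain ⟨⟨hs'k, hρtk, hρ'k, hρhk⟩, _, _, _, _, _⟩ := step k (inv k)
    exact ⟨hsk, hs'k, Set.mem_Ioo.mpr hρk, Set.mem_Ioo.mpr hρtk,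
      Set.mem_Ioo.mpr hρ'k, Set.mem_Ioo.mpr hρhk⟩
  · calc Real.sqrt β₀ < Real.sqrt 1 := Real.sqrt_lt_sqrt hβ₀0.le hβ₀1
      _ = 1 := Real.sqrt_one
  · calc |(s k) ^ 2 - σ₁ ^ 2| ≤ (α ^ 2) ^ k * |(s 0) ^ 2 - σ₁ ^ 2| := hsb k
      _ = α ^ (2 * k) * |(s 0) ^ 2 - σ₁ ^ 2| := by rw [← pow_mul]
  · calc |Xi (ρ k) σ₀ (s k) - 1 / ε| ≤ β₀ ^ k * |Xi (ρ 0) σ₀ (s 0) - 1 / ε| := hχb k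
      _ = Real.sqrt β₀ ^ (2 * k) * |Xi (ρ 0) σ₀ (s 0) - 1 / ε| := by
          rw [pow_mul, Real.sq_sqrt hβ₀0.le]
  · rw [← hlimval]
    exact hlim
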